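/- For the nearest-neighbor random walk with constant drift δ ∈ (0,1) toward the origin, the second moment of the first return time to the origin satisfies E(τ²) = 1 + δ⁻¹ + δ⁻² + δ⁻³. -/

import Mathlib

/-- One-step transition probability of the nearest-neighbor random walk on ℤ with
constant drift `δ` toward the origin: from 0 it steps to ±1 with probability 1/2;
from `i ≠ 0` it steps away from 0 with probability `(1-δ)/2` and toward 0 with
probability `(1+δ)/2`. -/
noncomputable def stepP (δ : ℝ) (i j : ℤ) : ℝ :=
  if i = 0 then (if j = 1 ∨ j = -1 then 1 / 2 else 0)
  else if j = i + 1 then (if 0 < i then (1 - δ) / 2 else (1 + δ) / 2)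
  else if j = i - 1 then (if 0 < i then (1 + δ) / 2 else (1 - δ) / 2)
  else 0

/-- `hitD δ n j` is the probability that the walk started at `j` first hits `0`
exactly at time `n`. -/
noncomputable def hitD (δ : ℝ) : ℕ → ℤ → ℝ
  | 0, j => if j = 0 then 1 else 0
  | n + 1, j =>
      if j = 0 then 0
      else stepP δ j (j + 1) * hitD δ n (j + 1) + stepP δ j (j - 1) * hitD δ n (j - 1)

/-- `retD δ n` is the probability that the first return time `τ` to `0` of the walk
started at `0` equals `n`. -/
noncomputable def retD (δ : ℝ) : ℕ → ℝ
  | 0 => 0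
  | n + 1 => stepP δ 0 1 * hitD δ n 1 + stepP δ 0 (-1) * hitD δ n (-1)

open Finset

section lemmas
variable {δ : ℝ}

lemma stepP_up {i : ℤ} (hi : 0 < i) : stepP δ i (i + 1) = (1 - δ) / 2 := by
  simp [stepP, hi.ne', hi]

lemma stepP_down {i : ℤ} (hi : 0 < i) : stepP δ i (i - 1) = (1 + δ) / 2 := by
  simp [stepP, hi.ne', hi, show (i - 1 : ℤ) ≠ i + 1 by omega]

lemma stepP_neg (i j : ℤ) : stepP δ (-i) (-j) = stepP δ i j := by
  unfold stepP
  split_ifs <;> first | rfl | (exfalso; omega)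

lemma hitD_neg : ∀ (n : ℕ) (j : ℤ), hitD δ n (-j) = hitD δ n j := by
  intro n
  induction n with
  | zero => intro j; simp [hitD, neg_eq_zero]
  | succ n ih =>
      intro j
      unfold hitD
      by_cases hj : j = 0
      · simp [hj]
      · rw [if_neg (by simpa using hj), if_neg hj]
        have h1 : (-j) + 1 = -(j - 1) := by ring
        have h2 : (-j) - 1 = -(j + 1) := by ring
        rw [h1, h2, ih (j - 1), ih (j + 1)]
        rw [show (-j : ℤ) = -j from rfl]
        have e1 : stepP δ (-j) (-(j - 1)) = stepP δ j (j - 1) := stepP_neg j (j - 1)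
        have e2 : stepP δ (-j) (-(j + 1)) = stepP δ j (j + 1) := stepP_neg j (j + 1)
        rw [e1, e2]; ring

lemma stepP_nonneg (hδ0 : 0 < δ) (hδ1 : δ < 1) (i j : ℤ) : 0 ≤ stepP δ i j := by
  unfold stepP
  split_ifs <;> linarith

lemma hitD_nonneg (hδ0 : 0 < δ) (hδ1 : δ < 1) : ∀ (n : ℕ) (j : ℤ), 0 ≤ hitD δ n j := by
  intro n
  induction n with
  | zero => intro j; unfold hitD; split_ifs <;> norm_num
  | succ n ih =>
      intro j
      unfold hitD
      split_ifs
      · norm_num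
      · exact add_nonneg (mul_nonneg (stepP_nonneg hδ0 hδ1 _ _) (ih _))
          (mul_nonneg (stepP_nonneg hδ0 hδ1 _ _) (ih _))

end lemmas

section lemmas2
variable {δ : ℝ}

lemma hitD_zero : ∀ n : ℕ, hitD δ n 0 = if n = 0 then 1 else 0 := by
  intro n; cases n <;> simp [hitD]

lemma hitD_succ (n : ℕ) {j : ℤ} (hj : j ≠ 0) :
    hitD δ (n+1) j = stepP δ j (j+1) * hitD δ n (j+1) + stepP δ j (j-1) * hitD δ n (j-1) := by
  simp only [hitD, if_neg hj]

lemma stepP_up' {i : ℤ} (hi : i < 0) : stepP δ i (i + 1) = (1 + δ) / 2 := by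
  simp [stepP, hi.ne, show ¬ (0:ℤ) < i by omega]

lemma stepP_down' {i : ℤ} (hi : i < 0) : stepP δ i (i - 1) = (1 - δ) / 2 := by
  simp [stepP, hi.ne, show (i - 1 : ℤ) ≠ i + 1 by omega, show ¬ (0:ℤ) < i by omega]

lemma stepP_sum {j : ℤ} (hj : j ≠ 0) : stepP δ j (j + 1) + stepP δ j (j - 1) = 1 := by
  rcases lt_or_gt_of_ne hj with h | h
  · rw [stepP_up' h, stepP_down' h]; ring
  · rw [stepP_up h, stepP_down h]; ring

lemma sum_hitD_le_one (hδ0 : 0 < δ) (hδ1 : δ < 1) :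
    ∀ (N : ℕ) (j : ℤ), ∑ n ∈ range N, hitD δ n j ≤ 1 := by
  intro N
  induction N with
  | zero => intro j; simp
  | succ N ih =>
      intro j
      rw [Finset.sum_range_succ']
      by_cases hj : j = 0
      · subst hj
        have : ∀ n ∈ range N, hitD δ (n + 1) (0:ℤ) = 0 := by
          intro n _; simp [hitD]
        rw [Finset.sum_congr rfl this]
        simp [hitD]
      · have hterm : ∀ n ∈ range N, hitD δ (n + 1) j
            = stepP δ j (j + 1) * hitD δ n (j + 1) + stepP δ j (j - 1) * hitD δ n (j - 1) := by
          intro n _; rw [show hitD δ (n+1) j = if j = 0 then 0 else _ from rfl, if_neg hj]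
        rw [Finset.sum_congr rfl hterm, Finset.sum_add_distrib, ← Finset.mul_sum, ← Finset.mul_sum]
        have h0 : hitD δ 0 j = 0 := by simp [hitD, hj]
        rw [h0, add_zero]
        have b1 := ih (j + 1)
        have b2 := ih (j - 1)
        have s1 := stepP_nonneg hδ0 hδ1 (δ := δ) j (j + 1)
        have s2 := stepP_nonneg hδ0 hδ1 (δ := δ) j (j - 1)
        calc stepP δ j (j+1) * ∑ n ∈ range N, hitD δ n (j+1)
              + stepP δ j (j-1) * ∑ n ∈ range N, hitD δ n (j-1)
            ≤ stepP δ j (j+1) * 1 + stepP δ j (j-1) * 1 := by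
              gcongr <;>
              first
                | exact b1
                | exact b2
                | exact Finset.sum_nonneg fun n _ => hitD_nonneg hδ0 hδ1 n _
          _ = 1 := by rw [mul_one, mul_one, stepP_sum hj]

end lemmas2

section lemmas3
variable {δ : ℝ}

/-- Geometric decay bound: with `t = (1-δ)⁻¹` and `s = 1 - δ^2/2`,
`hitD δ n j ≤ s^n * t^|j|`. -/
lemma hitD_le (hδ0 : 0 < δ) (hδ1 : δ < 1) :
    ∀ (n : ℕ) (j : ℤ), hitD δ n j ≤ (1 - δ^2/2)^n * ((1-δ)⁻¹)^j.natAbs := by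
  have ht1 : (1:ℝ) ≤ (1-δ)⁻¹ := by
    rw [le_inv_comm₀ one_pos (by linarith)]; linarith
  have ht0 : (0:ℝ) < (1-δ)⁻¹ := by positivity
  have hs0 : (0:ℝ) < 1 - δ^2/2 := by nlinarith
  -- key identity: (1-δ)/2 * t^2 + (1+δ)/2 = s * t
  have key : (1-δ)/2 * ((1-δ)⁻¹)^2 + (1+δ)/2 = (1 - δ^2/2) * (1-δ)⁻¹ := by
    have h : (1:ℝ) - δ ≠ 0 := by linarith
    field_simp
    ring
  intro n
  induction n with
  | zero =>
      intro j
      unfold hitD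
      split_ifs with h
      · simp [h]
      · positivity
  | succ n ih =>
      intro j
      rcases lt_trichotomy j 0 with hj | hj | hj
      · rw [← hitD_neg (δ:=δ) (n+1) j]
        have : (-j).natAbs = j.natAbs := by omega
        rw [← this]
        generalize hk : -j = k
        have hk0 : 0 < k := by omega
        -- positive case below, reuse
        unfold hitD
        rw [if_neg hk0.ne', stepP_up hk0, stepP_down hk0]
        have e1 : (k+1).natAbs = k.natAbs + 1 := by omega
        have e2 : (k-1).natAbs + 1 = k.natAbs := by omega
        calc (1-δ)/2 * hitD δ n (k+1) + (1+δ)/2 * hitD δ n (k-1)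
            ≤ (1-δ)/2 * ((1 - δ^2/2)^n * ((1-δ)⁻¹)^(k+1).natAbs)
              + (1+δ)/2 * ((1 - δ^2/2)^n * ((1-δ)⁻¹)^(k-1).natAbs) := by
              gcongr <;> first | exact ih _ | linarith | exact hitD_nonneg hδ0 hδ1 _ _
          _ = (1 - δ^2/2)^(n+1) * ((1-δ)⁻¹)^k.natAbs := by
              rw [e1, ← e2, pow_succ, pow_succ]
              linear_combination ((1 - δ^2/2)^n * ((1-δ)⁻¹)^((k-1).natAbs)) * key
      · subst hj
        unfold hitD
        simp only [if_pos rfl]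
        positivity
      · unfold hitD
        rw [if_neg hj.ne', stepP_up hj, stepP_down hj]
        have e1 : (j+1).natAbs = j.natAbs + 1 := by omega
        have e2 : (j-1).natAbs + 1 = j.natAbs := by omega
        calc (1-δ)/2 * hitD δ n (j+1) + (1+δ)/2 * hitD δ n (j-1)
            ≤ (1-δ)/2 * ((1 - δ^2/2)^n * ((1-δ)⁻¹)^(j+1).natAbs)
              + (1+δ)/2 * ((1 - δ^2/2)^n * ((1-δ)⁻¹)^(j-1).natAbs) := by
              gcongr <;> first | exact ih _ | linarith | exact hitD_nonneg hδ0 hδ1 _ _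
          _ = (1 - δ^2/2)^(n+1) * ((1-δ)⁻¹)^j.natAbs := by
              rw [e1, ← e2, pow_succ, pow_succ]
              linear_combination ((1 - δ^2/2)^n * ((1-δ)⁻¹)^((j-1).natAbs)) * key

end lemmas3

section lemmas4
variable {δ : ℝ}

lemma conv_zero (n : ℕ) :
    ∑ k ∈ range (n + 1), hitD δ k 1 * hitD δ (n - k) 0 = hitD δ n 1 := by
  rw [Finset.sum_eq_single n]
  · simp [hitD_zero]
  · intro k hk hkn
    have hk' : k < n + 1 := Finset.mem_range.mp hk
    rw [hitD_zero, if_neg (by omega), mul_zero]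
  · intro h; exact absurd (Finset.self_mem_range_succ n) h

lemma conv_hitD :
    ∀ (n : ℕ) (j : ℤ), 1 ≤ j →
      hitD δ n (j + 1) = ∑ k ∈ range (n + 1), hitD δ k 1 * hitD δ (n - k) j := by
  intro n
  induction n with
  | zero =>
      intro j hj
      have h1 : hitD δ 0 (j + 1) = 0 := by
        unfold hitD; rw [if_neg (by omega)]
      have h2 : hitD δ 0 1 = 0 := by unfold hitD; norm_num
      simp [h1, h2]
  | succ n ih =>
      intro j hj
      have hj1 : (0:ℤ) < j + 1 := by omega
      -- LHS
      have hl : hitD δ (n+1) (j+1)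
          = (1-δ)/2 * hitD δ n (j+2) + (1+δ)/2 * hitD δ n j := by
        rw [hitD_succ n hj1.ne', stepP_up hj1, stepP_down hj1,
          show j + 1 + 1 = j + 2 by ring, show j + 1 - 1 = j by ring]
      -- RHS
      rw [hl, Finset.sum_range_succ]
      have hz : hitD δ (n + 1 - (n+1)) j = 0 := by
        simp only [Nat.sub_self]
        unfold hitD; rw [if_neg (by omega)]
      rw [hz, mul_zero, add_zero]
      have hterm : ∀ k ∈ range (n+1),
          hitD δ k 1 * hitD δ (n + 1 - k) j
          = (1-δ)/2 * (hitD δ k 1 * hitD δ (n - k) (j+1))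
            + (1+δ)/2 * (hitD δ k 1 * hitD δ (n - k) (j-1)) := by
        intro k hk
        have hkn : k ≤ n := by have := Finset.mem_range.mp hk; omega
        have : n + 1 - k = (n - k) + 1 := by omega
        rw [this]
        have hj0 : (0:ℤ) < j := by omega
        rw [hitD_succ (n-k) hj0.ne', stepP_up hj0, stepP_down hj0]
        ring
      rw [Finset.sum_congr rfl hterm, Finset.sum_add_distrib, ← Finset.mul_sum, ← Finset.mul_sum]
      congr 1
      · congr 1
        have := ih (j+1) (by omega)
        rw [show j + 1 + 1 = j + 2 by ring] at this
        exact this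
      · congr 1
        rcases eq_or_lt_of_le hj with h | h
        · rw [← h]
          norm_num [conv_zero]
        · have := ih (j-1) (by omega)
          rw [show j - 1 + 1 = j by ring] at this
          exact this

lemma a_rec (n : ℕ) :
    hitD δ (n+1) 1 = (1-δ)/2 * (∑ k ∈ range (n + 1), hitD δ k 1 * hitD δ (n - k) 1)
      + (1+δ)/2 * (if n = 0 then 1 else 0) := by
  have h01 : (0:ℤ) < 1 := one_pos
  rw [hitD_succ n (by norm_num : (1:ℤ) ≠ 0), stepP_up h01, stepP_down h01,
    show (1:ℤ) + 1 = 1 + 1 from rfl, conv_hitD n 1 le_rfl,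
    show (1:ℤ) - 1 = 0 from rfl, hitD_zero]


end lemmas4

section final
variable {δ : ℝ}

lemma summable_weight (hδ0 : 0 < δ) (hδ1 : δ < 1) (k : ℕ) :
    Summable (fun n : ℕ => (n:ℝ)^k * hitD δ n 1) := by
  have hs0 : (0:ℝ) < 1 - δ^2/2 := by nlinarith
  have hs1 : 1 - δ^2/2 < 1 := by nlinarith
  have hg : Summable (fun n : ℕ => (n:ℝ)^k * (1 - δ^2/2)^n) :=
    summable_pow_mul_geometric_of_norm_lt_one k
      (by rw [Real.norm_eq_abs, abs_of_pos hs0]; exact hs1)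
  apply Summable.of_nonneg_of_le _ _ (hg.mul_right ((1-δ)⁻¹))
  · intro n; exact mul_nonneg (by positivity) (hitD_nonneg hδ0 hδ1 n 1)
  · intro n
    have h := hitD_le hδ0 hδ1 n 1
    simp only [Int.natAbs_one, pow_one] at h
    calc (n:ℝ)^k * hitD δ n 1 ≤ (n:ℝ)^k * ((1 - δ^2/2)^n * (1-δ)⁻¹) :=
          mul_le_mul_of_nonneg_left h (by positivity)
      _ = (n:ℝ)^k * (1 - δ^2/2)^n * (1-δ)⁻¹ := by ring

lemma summable_weight_norm (hδ0 : 0 < δ) (hδ1 : δ < 1) (k : ℕ) :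
    Summable (fun n : ℕ => ‖(n:ℝ)^k * hitD δ n 1‖) := by
  have h := summable_weight hδ0 hδ1 k
  exact (summable_abs_iff.mpr h).congr fun n => (Real.norm_eq_abs _).symm

end final

section moments
variable {δ : ℝ}
open Finset

lemma a_zero : hitD δ 0 1 = 0 := by simp [hitD]

lemma summable_conv (hδ0 : 0 < δ) (hδ1 : δ < 1) (k l : ℕ) :
    Summable (fun n : ℕ => ∑ i ∈ range (n+1),
      ((i:ℝ)^k * hitD δ i 1) * (((n-i:ℕ):ℝ)^l * hitD δ (n-i) 1)) :=
  (summable_norm_sum_mul_range_of_summable_norm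
    (summable_weight_norm hδ0 hδ1 k) (summable_weight_norm hδ0 hδ1 l)).of_norm

lemma tsum_conv (hδ0 : 0 < δ) (hδ1 : δ < 1) (k l : ℕ) :
    ∑' n : ℕ, (∑ i ∈ range (n+1),
      ((i:ℝ)^k * hitD δ i 1) * (((n-i:ℕ):ℝ)^l * hitD δ (n-i) 1))
    = (∑' n : ℕ, (n:ℝ)^k * hitD δ n 1) * (∑' n : ℕ, (n:ℝ)^l * hitD δ n 1) :=
  (tsum_mul_tsum_eq_tsum_sum_range_of_summable_norm
    (summable_weight_norm hδ0 hδ1 k) (summable_weight_norm hδ0 hδ1 l)).symm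

lemma summable_ind : Summable (fun n : ℕ => if n = 0 then (1:ℝ) else 0) := by
  apply summable_of_finite_support
  apply Set.Finite.subset (Set.finite_singleton 0)
  intro n hn
  simp only [Function.mem_support] at hn
  by_contra h
  exact hn (if_neg h)

lemma tsum_ind : ∑' n : ℕ, (if n = 0 then (1:ℝ) else 0) = 1 := by
  rw [tsum_eq_single 0] <;> simp

lemma A_eq (hδ0 : 0 < δ) (hδ1 : δ < 1) : ∑' n : ℕ, hitD δ n 1 = 1 := by
  have ha : Summable (fun n : ℕ => hitD δ n 1) := by
    simpa using summable_weight hδ0 hδ1 0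
  set A := ∑' n : ℕ, hitD δ n 1 with hA
  have hA1 : A ≤ 1 :=
    Real.tsum_le_of_sum_range_le (fun n => hitD_nonneg hδ0 hδ1 n 1)
      (fun n => sum_hitD_le_one hδ0 hδ1 n 1)
  have hconv := summable_conv hδ0 hδ1 0 0
  simp only [pow_zero, one_mul] at hconv
  have htconv := tsum_conv hδ0 hδ1 0 0
  simp only [pow_zero, one_mul] at htconv
  have keyA : A = (1-δ)/2 * (A*A) + (1+δ)/2 := by
    calc A = hitD δ 0 1 + ∑' n : ℕ, hitD δ (n+1) 1 := by rw [hA]; exact Summable.tsum_eq_zero_add ha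
      _ = ∑' n : ℕ, ((1-δ)/2 * (∑ i ∈ range (n+1), hitD δ i 1 * hitD δ (n-i) 1)
            + (1+δ)/2 * (if n = 0 then 1 else 0)) := by
          rw [a_zero, zero_add]; exact tsum_congr (fun n => a_rec n)
      _ = (1-δ)/2 * (A*A) + (1+δ)/2 := by
          rw [Summable.tsum_add (hconv.mul_left _) (summable_ind.mul_left _),
            tsum_mul_left, tsum_mul_left, tsum_ind, htconv, mul_one]
  have hfac : (A - 1) * ((1-δ)/2 * A - (1+δ)/2) = 0 := by linear_combination (-1 : ℝ) * keyA
  rcases mul_eq_zero.mp hfac with h | h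
  · linarith
  · nlinarith
end moments

section moments2
variable {δ : ℝ}
open Finset

lemma cast_sub_of_le {n i : ℕ} (h : i ≤ n) : ((n - i : ℕ):ℝ) = (n:ℝ) - i := by
  have h2 : (n - i : ℕ) + i = n := by omega
  have := congrArg (Nat.cast : ℕ → ℝ) h2
  push_cast at this; linarith

lemma expand1 (n : ℕ) :
    ((n:ℝ)+1) * (∑ i ∈ range (n+1), hitD δ i 1 * hitD δ (n-i) 1)
    = (∑ i ∈ range (n+1), ((i:ℝ) * hitD δ i 1) * hitD δ (n-i) 1)
      + (∑ i ∈ range (n+1), hitD δ i 1 * (((n-i:ℕ):ℝ) * hitD δ (n-i) 1))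
      + ∑ i ∈ range (n+1), hitD δ i 1 * hitD δ (n-i) 1 := by
  rw [← Finset.sum_add_distrib, ← Finset.sum_add_distrib, Finset.mul_sum]
  refine Finset.sum_congr rfl fun i hi => ?_
  rw [cast_sub_of_le (by have := Finset.mem_range.mp hi; omega : i ≤ n)]
  ring

lemma expand2 (n : ℕ) :
    (((n:ℝ)+1))^2 * (∑ i ∈ range (n+1), hitD δ i 1 * hitD δ (n-i) 1)
    = (∑ i ∈ range (n+1), ((i:ℝ)^2 * hitD δ i 1) * hitD δ (n-i) 1)
      + (∑ i ∈ range (n+1), hitD δ i 1 * (((n-i:ℕ):ℝ)^2 * hitD δ (n-i) 1))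
      + 2 * (∑ i ∈ range (n+1), ((i:ℝ) * hitD δ i 1) * (((n-i:ℕ):ℝ) * hitD δ (n-i) 1))
      + 2 * (∑ i ∈ range (n+1), ((i:ℝ) * hitD δ i 1) * hitD δ (n-i) 1)
      + 2 * (∑ i ∈ range (n+1), hitD δ i 1 * (((n-i:ℕ):ℝ) * hitD δ (n-i) 1))
      + ∑ i ∈ range (n+1), hitD δ i 1 * hitD δ (n-i) 1 := by
  rw [Finset.mul_sum, Finset.mul_sum, Finset.mul_sum, Finset.mul_sum,
    ← Finset.sum_add_distrib, ← Finset.sum_add_distrib, ← Finset.sum_add_distrib,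
    ← Finset.sum_add_distrib, ← Finset.sum_add_distrib]
  refine Finset.sum_congr rfl fun i hi => ?_
  rw [cast_sub_of_le (by have := Finset.mem_range.mp hi; omega : i ≤ n)]
  ring

lemma B_eq (hδ0 : 0 < δ) (hδ1 : δ < 1) : δ * ∑' n : ℕ, (n:ℝ) * hitD δ n 1 = 1 := by
  have ha : Summable (fun n : ℕ => hitD δ n 1) := by
    simpa using summable_weight hδ0 hδ1 0
  have hb : Summable (fun n : ℕ => (n:ℝ) * hitD δ n 1) := by
    simpa using summable_weight hδ0 hδ1 1
  have hA := A_eq hδ0 hδ1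
  have s10 := summable_conv hδ0 hδ1 1 0
  have s01 := summable_conv hδ0 hδ1 0 1
  have s00 := summable_conv hδ0 hδ1 0 0
  simp only [pow_zero, pow_one, one_mul] at s10 s01 s00
  have t10 := tsum_conv hδ0 hδ1 1 0
  have t01 := tsum_conv hδ0 hδ1 0 1
  have t00 := tsum_conv hδ0 hδ1 0 0
  simp only [pow_zero, pow_one, one_mul] at t10 t01 t00
  simp only [hA, mul_one, one_mul] at t10 t01 t00
  set B := ∑' n : ℕ, (n:ℝ) * hitD δ n 1 with hB
  have keyB : B = (1-δ)/2 * (B + B + 1) + (1+δ)/2 := by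
    calc B = (0:ℝ) * hitD δ 0 1 + ∑' n : ℕ, (((n+1:ℕ)):ℝ) * hitD δ (n+1) 1 := by
          rw [hB]; exact_mod_cast Summable.tsum_eq_zero_add hb
      _ = ∑' n : ℕ, ((1-δ)/2 * ((∑ i ∈ range (n+1), ((i:ℝ) * hitD δ i 1) * hitD δ (n-i) 1)
              + (∑ i ∈ range (n+1), hitD δ i 1 * (((n-i:ℕ):ℝ) * hitD δ (n-i) 1))
              + ∑ i ∈ range (n+1), hitD δ i 1 * hitD δ (n-i) 1)
            + (1+δ)/2 * (if n = 0 then 1 else 0)) := by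
          rw [zero_mul, zero_add]
          refine tsum_congr fun n => ?_
          rw [show (((n+1:ℕ)):ℝ) = (n:ℝ)+1 by push_cast; ring, a_rec n]
          by_cases h : n = 0
          · subst h; simp [a_zero]
          · simp only [if_neg h, mul_zero, add_zero]
            linear_combination ((1-δ)/2) * expand1 (δ := δ) n
      _ = (1-δ)/2 * (B + B + 1) + (1+δ)/2 := by
          rw [Summable.tsum_add (((s10.add s01).add s00).mul_left _) (summable_ind.mul_left _),
            tsum_mul_left, tsum_mul_left, tsum_ind, mul_one,
            Summable.tsum_add (s10.add s01) s00, Summable.tsum_add s10 s01, t10, t01, t00]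
  -- solve : B = (1-δ)/2 * (2B + 1) + (1+δ)/2  ⟹  δ B = 1
  linear_combination keyB

end moments2

section moments3
variable {δ : ℝ}
open Finset

lemma C_eq (hδ0 : 0 < δ) (hδ1 : δ < 1) :
    δ * ∑' n : ℕ, (n:ℝ)^2 * hitD δ n 1
      = (1-δ) * δ⁻¹ * δ⁻¹ + 2 * (1-δ) * δ⁻¹ + 1 := by
  have hδ : δ ≠ 0 := hδ0.ne'
  have ha : Summable (fun n : ℕ => hitD δ n 1) := by
    simpa using summable_weight hδ0 hδ1 0
  have hc : Summable (fun n : ℕ => (n:ℝ)^2 * hitD δ n 1) := summable_weight hδ0 hδ1 2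
  have hA := A_eq hδ0 hδ1
  have hBv : ∑' n : ℕ, (n:ℝ) * hitD δ n 1 = δ⁻¹ := by
    have h := B_eq hδ0 hδ1
    field_simp
    linarith
  have s20 := summable_conv hδ0 hδ1 2 0
  have s02 := summable_conv hδ0 hδ1 0 2
  have s11 := summable_conv hδ0 hδ1 1 1
  have s10 := summable_conv hδ0 hδ1 1 0
  have s01 := summable_conv hδ0 hδ1 0 1
  have s00 := summable_conv hδ0 hδ1 0 0
  simp only [pow_zero, pow_one, one_mul] at s20 s02 s11 s10 s01 s00
  have t20 := tsum_conv hδ0 hδ1 2 0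
  have t02 := tsum_conv hδ0 hδ1 0 2
  have t11 := tsum_conv hδ0 hδ1 1 1
  have t10 := tsum_conv hδ0 hδ1 1 0
  have t01 := tsum_conv hδ0 hδ1 0 1
  have t00 := tsum_conv hδ0 hδ1 0 0
  simp only [pow_zero, pow_one, one_mul] at t20 t02 t11 t10 t01 t00
  simp only [hA, hBv, mul_one, one_mul] at t20 t02 t11 t10 t01 t00
  set C := ∑' n : ℕ, (n:ℝ)^2 * hitD δ n 1 with hC
  have keyC : C = (1-δ)/2 * (C + C + 2*(δ⁻¹*δ⁻¹) + 2*δ⁻¹ + 2*δ⁻¹ + 1) + (1+δ)/2 := by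
    calc C = (0:ℝ)^2 * hitD δ 0 1 + ∑' n : ℕ, (((n+1:ℕ)):ℝ)^2 * hitD δ (n+1) 1 := by
          rw [hC]; exact_mod_cast Summable.tsum_eq_zero_add hc
      _ = ∑' n : ℕ, ((1-δ)/2 * ((∑ i ∈ range (n+1), ((i:ℝ)^2 * hitD δ i 1) * hitD δ (n-i) 1)
              + (∑ i ∈ range (n+1), hitD δ i 1 * (((n-i:ℕ):ℝ)^2 * hitD δ (n-i) 1))
              + 2 * (∑ i ∈ range (n+1), ((i:ℝ) * hitD δ i 1) * (((n-i:ℕ):ℝ) * hitD δ (n-i) 1))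
              + 2 * (∑ i ∈ range (n+1), ((i:ℝ) * hitD δ i 1) * hitD δ (n-i) 1)
              + 2 * (∑ i ∈ range (n+1), hitD δ i 1 * (((n-i:ℕ):ℝ) * hitD δ (n-i) 1))
              + ∑ i ∈ range (n+1), hitD δ i 1 * hitD δ (n-i) 1)
            + (1+δ)/2 * (if n = 0 then 1 else 0)) := by
          rw [zero_pow (by norm_num), zero_mul, zero_add]
          refine tsum_congr fun n => ?_
          rw [show (((n+1:ℕ)):ℝ) = (n:ℝ)+1 by push_cast; ring, a_rec n]
          by_cases h : n = 0
          · subst h; simp [a_zero]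
          · simp only [if_neg h, mul_zero, add_zero]
            linear_combination ((1-δ)/2) * expand2 (δ := δ) n
      _ = (1-δ)/2 * (C + C + 2*(δ⁻¹*δ⁻¹) + 2*δ⁻¹ + 2*δ⁻¹ + 1) + (1+δ)/2 := by
          rw [Summable.tsum_add (((((((s20.add s02).add (s11.mul_left 2)).add (s10.mul_left 2)).add
                (s01.mul_left 2))).add s00).mul_left _) (summable_ind.mul_left _),
            tsum_mul_left, tsum_mul_left, tsum_ind, mul_one,
            Summable.tsum_add (((((s20.add s02).add (s11.mul_left 2)).add (s10.mul_left 2)).add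
                (s01.mul_left 2))) s00,
            Summable.tsum_add ((((s20.add s02).add (s11.mul_left 2)).add (s10.mul_left 2)))
              (s01.mul_left 2),
            Summable.tsum_add (((s20.add s02).add (s11.mul_left 2))) (s10.mul_left 2),
            Summable.tsum_add ((s20.add s02)) (s11.mul_left 2),
            Summable.tsum_add s20 s02, tsum_mul_left, tsum_mul_left, tsum_mul_left,
            t20, t02, t11, t10, t01, t00]
  linear_combination keyC

end moments3

section finalthm
variable {δ : ℝ}

lemma retD_succ (n : ℕ) : retD δ (n+1) = hitD δ n 1 := by
  show stepP δ 0 1 * hitD δ n 1 + stepP δ 0 (-1) * hitD δ n (-1) = hitD δ n 1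
  rw [show hitD δ n (-1) = hitD δ n 1 from hitD_neg n 1]
  have h1 : stepP δ 0 1 = 1/2 := by simp [stepP]
  have h2 : stepP δ 0 (-1) = 1/2 := by simp [stepP]
  rw [h1, h2]; ring

theorem second_moment_first_return' (hδ0 : 0 < δ) (hδ1 : δ < 1) :
    ∑' n : ℕ, (n : ℝ) ^ 2 * retD δ n = 1 + δ⁻¹ + δ⁻¹ ^ 2 + δ⁻¹ ^ 3 := by
  have hδ : δ ≠ 0 := hδ0.ne'
  have ha : Summable (fun n : ℕ => hitD δ n 1) := by
    simpa using summable_weight hδ0 hδ1 0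
  have hb : Summable (fun n : ℕ => (n:ℝ) * hitD δ n 1) := by
    simpa using summable_weight hδ0 hδ1 1
  have hc : Summable (fun n : ℕ => (n:ℝ)^2 * hitD δ n 1) := summable_weight hδ0 hδ1 2
  have hA := A_eq hδ0 hδ1
  have hBv : ∑' n : ℕ, (n:ℝ) * hitD δ n 1 = δ⁻¹ := by
    have h := B_eq hδ0 hδ1
    field_simp
    linarith
  have hC := C_eq hδ0 hδ1
  have hsum : Summable (fun n : ℕ => (n:ℝ)^2 * hitD δ n 1
      + (2 * ((n:ℝ) * hitD δ n 1) + hitD δ n 1)) := hc.add ((hb.mul_left 2).add ha)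
  have hpt : ∀ n : ℕ, (((n+1:ℕ)):ℝ)^2 * retD δ (n+1)
      = (n:ℝ)^2 * hitD δ n 1 + (2 * ((n:ℝ) * hitD δ n 1) + hitD δ n 1) := by
    intro n
    rw [retD_succ n]
    push_cast
    ring
  have hsucc : Summable (fun n : ℕ => (((n+1:ℕ)):ℝ)^2 * retD δ (n+1)) :=
    hsum.congr fun n => (hpt n).symm
  have hf : Summable (fun n : ℕ => (n:ℝ)^2 * retD δ n) :=
    (summable_nat_add_iff 1).mp hsucc
  rw [Summable.tsum_eq_zero_add hf]
  simp only [Nat.cast_zero, Nat.cast_add, Nat.cast_one]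
  rw [show ((0:ℝ)^2 * retD δ 0) = 0 by simp [retD], zero_add]
  have : ∑' n : ℕ, (((n:ℝ))+1)^2 * retD δ (n+1)
      = ∑' n : ℕ, ((n:ℝ)^2 * hitD δ n 1 + (2 * ((n:ℝ) * hitD δ n 1) + hitD δ n 1)) := by
    refine tsum_congr fun n => ?_
    have := hpt n
    push_cast at this
    exact this
  rw [this, Summable.tsum_add hc ((hb.mul_left 2).add ha), Summable.tsum_add (hb.mul_left 2) ha,
    tsum_mul_left, hA, hBv]
  field_simp at hC ⊢
  linear_combination hC

end finalthm

/-- For the walk with constant drift `δ ∈ (0,1)` toward the origin, the second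
moment of the first return time to the origin is `E(τ²) = 1 + δ⁻¹ + δ⁻² + δ⁻³`. -/
theorem second_moment_first_return (δ : ℝ) (hδ0 : 0 < δ) (hδ1 : δ < 1) :
    ∑' n : ℕ, (n : ℝ) ^ 2 * retD δ n = 1 + δ⁻¹ + δ⁻¹ ^ 2 + δ⁻¹ ^ 3 :=
  second_moment_first_return' hδ0 hδ1
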